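/- Let M, X', X, K', K, Y', Y, Z', Z, S', S be random variables on a common probability space, each taking values in a nonempty finite set. Assume the following four conditional independence (Markov chain) hypotheses: (i) Y and (M, X', K', K, Y', Z', S') are conditionally independent given (X, Z, S); (ii) (S, Z) and Y' are conditionally independent given (M, X', X, K', K, Z', S'); (iii) X and Y' are conditionally independent given (M, X', K', K, Z', S'); (iv) K and (M, X') are conditionally independent given (Y', K', Z', S'). Then H((K',K) | ((Z',Z),(S',S))) + I((M,X',X) ; (Y',Y) | ((K',K),(Z',Z),(S',S))) + H((S',S) | (Z',Z)) ≤ H(K' | (Z',S')) + I((M,X') ; Y' | (K',Z',S')) + H(S' | Z') + H(K | (M,X',K',Z',S')) + I(X ; Y | (Z,S)) + H(S | Z). -/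

import Mathlib

open MeasureTheory ProbabilityTheory Real

/-- Shannon entropy (natural log) of a finitely-valued random variable. -/
noncomputable def ent {Ω : Type*} [MeasurableSpace Ω] (μ : Measure Ω)
    {α : Type*} [Fintype α] (X : Ω → α) : ℝ :=
  ∑ x : α, Real.negMulLog ((μ (X ⁻¹' {x})).toReal)

/-- Conditional Shannon entropy `H(X|Y) = H(X,Y) - H(Y)`. -/
noncomputable def condEnt {Ω : Type*} [MeasurableSpace Ω] (μ : Measure Ω)
    {α β : Type*} [Fintype α] [Fintype β] (X : Ω → α) (Y : Ω → β) : ℝ :=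
  ent μ (fun ω => (X ω, Y ω)) - ent μ Y

/-- Mutual information `I(X;Y) = H(X) + H(Y) - H(X,Y)`. -/
noncomputable def mutInfo {Ω : Type*} [MeasurableSpace Ω] (μ : Measure Ω)
    {α β : Type*} [Fintype α] [Fintype β] (X : Ω → α) (Y : Ω → β) : ℝ :=
  ent μ X + ent μ Y - ent μ (fun ω => (X ω, Y ω))

/-- Conditional mutual information `I(X;Y|Z) = H(X|Z) + H(Y|Z) - H(X,Y|Z)`. -/
noncomputable def condMutInfo {Ω : Type*} [MeasurableSpace Ω] (μ : Measure Ω)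
    {α β γ : Type*} [Fintype α] [Fintype β] [Fintype γ]
    (X : Ω → α) (Y : Ω → β) (Z : Ω → γ) : ℝ :=
  condEnt μ X Z + condEnt μ Y Z - condEnt μ (fun ω => (X ω, Y ω)) Z

section found
variable {Ω : Type*} [MeasurableSpace Ω] {μ : Measure Ω}

open scoped Classical in
lemma ent_congr {α β : Type*} [Fintype α] [Fintype β] {X : Ω → α} {Y : Ω → β}
    (g : α → β) (hg : Function.Injective g) (h : ∀ ω, Y ω = g (X ω)) :
    ent μ Y = ent μ X := by
  classical
  have hpre : ∀ x : α, Y ⁻¹' {g x} = X ⁻¹' {x} := by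
    intro x; ext ω; simp [h ω, hg.eq_iff]
  have hvan : ∀ y : β, y ∉ Finset.univ.image g → Real.negMulLog ((μ (Y ⁻¹' {y})).toReal) = 0 := by
    intro y hy
    have : Y ⁻¹' {y} = ∅ := by
      ext ω; simp only [Set.mem_preimage, Set.mem_singleton_iff, Set.mem_empty_iff_false, iff_false]
      intro hEq
      exact hy (Finset.mem_image.2 ⟨X ω, Finset.mem_univ _, by rw [← h ω, hEq]⟩)
    simp [this]
  unfold ent
  rw [← Finset.sum_subset (Finset.subset_univ (Finset.univ.image g)) (fun y _ hy => hvan y hy)]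
  rw [Finset.sum_image (fun a _ b _ hab => hg hab)]
  exact Finset.sum_congr rfl fun x _ => by rw [hpre x]

variable [IsProbabilityMeasure μ]

lemma preimage_toReal_sum {τ : Type*} [Fintype τ] [MeasurableSpace τ] [MeasurableSingletonClass τ]
    {W : Ω → τ} (hW : Measurable W) (s : Finset τ) :
    (μ (W ⁻¹' s)).toReal = ∑ t ∈ s, (μ (W ⁻¹' {t})).toReal := by
  have hdisj : (s : Set τ).PairwiseDisjoint (fun t => W ⁻¹' {t}) := by
    intro a _ b _ hab
    simp only [Function.onFun, Set.disjoint_left]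
    intro ω ha hb
    exact hab (by simp_all)
  have : W ⁻¹' s = ⋃ t ∈ s, W ⁻¹' {t} := by
    ext ω; simp
  rw [this, measure_biUnion_finset hdisj (fun t _ => hW (measurableSet_singleton t)),
    ENNReal.toReal_sum (fun t _ => (measure_lt_top μ _).ne)]

open scoped Classical in
lemma ent_comp_eq {τ σ : Type*} [Fintype τ] [Fintype σ] [MeasurableSpace τ]
    [MeasurableSingletonClass τ] {W : Ω → τ} (hW : Measurable W) (f : τ → σ) :
    ent μ (fun ω => f (W ω)) = ∑ y : σ, Real.negMulLog
      (∑ t : τ, if f t = y then (μ (W ⁻¹' {t})).toReal else 0) := by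
  classical
  unfold ent
  refine Finset.sum_congr rfl fun y _ => ?_
  have hset : (fun ω => f (W ω)) ⁻¹' {y} = W ⁻¹' (Finset.univ.filter (fun t => f t = y) : Finset τ) := by
    ext ω; simp
  rw [hset, preimage_toReal_sum hW, Finset.sum_filter]

end found

section pmf
variable {α β γ : Type*} [Fintype α] [Fintype β] [Fintype γ]

variable {α β γ : Type*} [Fintype α] [Fintype β] [Fintype γ]

lemma sum_reorder3 (f : α → β → γ → ℝ) :
    ∑ a, ∑ b, ∑ c, f a b c = ∑ c, ∑ a, ∑ b, f a b c := by
  calc ∑ a, ∑ b, ∑ c, f a b c = ∑ a, ∑ c, ∑ b, f a b c :=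
        Finset.sum_congr rfl (fun a _ => Finset.sum_comm)
    _ = ∑ c, ∑ a, ∑ b, f a b c := Finset.sum_comm

lemma pmf_cmi (q : α → β → γ → ℝ) (hq : ∀ a b c, 0 ≤ q a b c) :
    (∑ a, ∑ b, ∑ c, Real.negMulLog (q a b c)) + ∑ c, Real.negMulLog (∑ a, ∑ b, q a b c)
      ≤ (∑ a, ∑ c, Real.negMulLog (∑ b, q a b c))
        + ∑ b, ∑ c, Real.negMulLog (∑ a, q a b c) := by
  classical
  set sAC : α → γ → ℝ := fun a c => ∑ b, q a b c with hsAC_def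
  set sBC : β → γ → ℝ := fun b c => ∑ a, q a b c with hsBC_def
  set r : γ → ℝ := fun c => ∑ a, ∑ b, q a b c with hr_def
  have hsAC0 : ∀ a c, 0 ≤ sAC a c := fun a c => Finset.sum_nonneg fun b _ => hq a b c
  have hsBC0 : ∀ b c, 0 ≤ sBC b c := fun b c => Finset.sum_nonneg fun a _ => hq a b c
  have hr0 : ∀ c, 0 ≤ r c := fun c =>
    Finset.sum_nonneg fun a _ => Finset.sum_nonneg fun b _ => hq a b c
  -- marginal sums
  have hsum_sAC : ∀ c, ∑ a, sAC a c = r c := fun c => rfl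
  have hsum_sBC : ∀ c, ∑ b, sBC b c = r c := fun c => (Finset.sum_comm)
  -- rewrite entropies as triple sums
  have hAC : (∑ a, ∑ c, Real.negMulLog (sAC a c))
      = ∑ a, ∑ b, ∑ c, -(q a b c * Real.log (sAC a c)) := by
    refine Finset.sum_congr rfl fun a _ => ?_
    rw [Finset.sum_comm]
    refine Finset.sum_congr rfl fun c _ => ?_
    rw [Real.negMulLog, neg_mul, hsAC_def]
    rw [Finset.sum_mul, ← Finset.sum_neg_distrib]
  have hBC : (∑ b, ∑ c, Real.negMulLog (sBC b c))
      = ∑ a, ∑ b, ∑ c, -(q a b c * Real.log (sBC b c)) := by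
    rw [show (∑ a, ∑ b, ∑ c, -(q a b c * Real.log (sBC b c)))
        = ∑ b, ∑ a, ∑ c, -(q a b c * Real.log (sBC b c)) from Finset.sum_comm]
    refine Finset.sum_congr rfl fun b _ => ?_
    rw [Finset.sum_comm]
    refine Finset.sum_congr rfl fun c _ => ?_
    rw [Real.negMulLog, neg_mul, hsBC_def]
    rw [Finset.sum_mul, ← Finset.sum_neg_distrib]
  have hC : (∑ c, Real.negMulLog (r c))
      = ∑ a, ∑ b, ∑ c, -(q a b c * Real.log (r c)) := by
    rw [sum_reorder3]
    refine Finset.sum_congr rfl fun c _ => ?_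
    rw [Real.negMulLog, neg_mul, hr_def]
    rw [Finset.sum_mul, ← Finset.sum_neg_distrib]
    refine Finset.sum_congr rfl fun a _ => ?_
    rw [Finset.sum_mul, ← Finset.sum_neg_distrib]
  -- pointwise bound
  set g : α → β → γ → ℝ :=
    fun a b c => if 0 < r c then sAC a c * sBC b c / r c else 0 with hg_def
  have hkey : ∀ a b c, q a b c - g a b c
      ≤ -(q a b c * Real.log (sAC a c)) + -(q a b c * Real.log (sBC b c))
        - (Real.negMulLog (q a b c) + -(q a b c * Real.log (r c))) := by
    intro a b c
    have hg0 : 0 ≤ g a b c := by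
      rw [hg_def]
      dsimp only
      split
      next h => exact div_nonneg (mul_nonneg (hsAC0 a c) (hsBC0 b c)) (le_of_lt h)
      next h => exact le_refl 0
    rcases eq_or_lt_of_le (hq a b c) with hq0 | hqpos
    · rw [← hq0]
      simp only [Real.negMulLog, zero_mul, mul_zero, neg_zero, zero_sub, neg_mul, add_zero,
        zero_add, sub_zero]
      linarith [hg0]
    · have hsacpos : 0 < sAC a c :=
        lt_of_lt_of_le hqpos (Finset.single_le_sum (fun b _ => hq a b c) (Finset.mem_univ b))
      have hsbcpos : 0 < sBC b c :=
        lt_of_lt_of_le hqpos (Finset.single_le_sum (fun a _ => hq a b c) (Finset.mem_univ a))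
      have hrpos : 0 < r c := by
        refine lt_of_lt_of_le hsacpos ?_
        exact Finset.single_le_sum (fun a _ => hsAC0 a c) (Finset.mem_univ a)
      have hgval : g a b c = sAC a c * sBC b c / r c := by
        rw [hg_def]; simp [hrpos]
      have hu : 0 < sAC a c * sBC b c / (q a b c * r c) := by positivity
      have hlog := Real.log_le_sub_one_of_pos hu
      have hlogexp : Real.log (sAC a c * sBC b c / (q a b c * r c))
          = Real.log (sAC a c) + Real.log (sBC b c) - (Real.log (q a b c) + Real.log (r c)) := by
        rw [Real.log_div (by positivity) (by positivity), Real.log_mul hsacpos.ne' hsbcpos.ne',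
          Real.log_mul hqpos.ne' hrpos.ne']
      rw [hgval, Real.negMulLog]
      have h2 : q a b c * (Real.log (sAC a c) + Real.log (sBC b c)
          - (Real.log (q a b c) + Real.log (r c)))
          ≤ q a b c * (sAC a c * sBC b c / (q a b c * r c) - 1) := by
        refine mul_le_mul_of_nonneg_left ?_ (le_of_lt hqpos)
        rw [← hlogexp]; exact hlog
      have h3 : q a b c * (sAC a c * sBC b c / (q a b c * r c) - 1)
          = sAC a c * sBC b c / r c - q a b c := by
        field_simp
      nlinarith [h2, h3]
  -- sum the pointwise bound
  have hsumkey : (∑ a, ∑ b, ∑ c, (q a b c - g a b c))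
      ≤ (∑ a, ∑ c, Real.negMulLog (sAC a c)) + (∑ b, ∑ c, Real.negMulLog (sBC b c))
        - ((∑ a, ∑ b, ∑ c, Real.negMulLog (q a b c)) + ∑ c, Real.negMulLog (r c)) := by
    rw [hAC, hBC, hC]
    rw [show ((∑ a, ∑ b, ∑ c, -(q a b c * Real.log (sAC a c)))
        + (∑ a, ∑ b, ∑ c, -(q a b c * Real.log (sBC b c)))
        - ((∑ a, ∑ b, ∑ c, Real.negMulLog (q a b c))
          + ∑ a, ∑ b, ∑ c, -(q a b c * Real.log (r c))))
        = ∑ a, ∑ b, ∑ c, (-(q a b c * Real.log (sAC a c)) + -(q a b c * Real.log (sBC b c))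
            - (Real.negMulLog (q a b c) + -(q a b c * Real.log (r c)))) from by
      simp only [← Finset.sum_add_distrib, ← Finset.sum_sub_distrib]]
    refine Finset.sum_le_sum fun a _ => Finset.sum_le_sum fun b _ => Finset.sum_le_sum fun c _ => ?_
    exact hkey a b c
  -- the sum of q - g is nonnegative
  have hg_sum : (∑ a, ∑ b, ∑ c, g a b c) ≤ ∑ a, ∑ b, ∑ c, q a b c := by
    rw [sum_reorder3 g, sum_reorder3 q]
    refine Finset.sum_le_sum fun c _ => ?_
    by_cases hrc : 0 < r c
    · have : (∑ a, ∑ b, g a b c) = r c := by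
        have : (∑ a, ∑ b, g a b c) = (∑ a, sAC a c) * (∑ b, sBC b c) / r c := by
          rw [Finset.sum_mul_sum, hg_def]
          simp only [hrc, if_true]
          rw [Finset.sum_div]
          refine Finset.sum_congr rfl fun a _ => ?_
          rw [Finset.sum_div]
        rw [this, hsum_sAC, hsum_sBC]
        field_simp
      rw [this]
    · have hrc0 : r c = 0 := le_antisymm (not_lt.mp hrc) (hr0 c)
      have : (∑ a, ∑ b, g a b c) = 0 := by
        rw [hg_def]
        simp [hrc]
      rw [this]
      exact Finset.sum_nonneg fun a _ => Finset.sum_nonneg fun b _ => hq a b c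
  have hfinal : 0 ≤ ∑ a, ∑ b, ∑ c, (q a b c - g a b c) := by
    rw [show (∑ a, ∑ b, ∑ c, (q a b c - g a b c))
        = (∑ a, ∑ b, ∑ c, q a b c) - ∑ a, ∑ b, ∑ c, g a b c from by
      simp only [← Finset.sum_sub_distrib]]
    linarith [hg_sum]
  linarith [hsumkey, hfinal]

end pmf

theorem condMutInfo_nonneg {Ω : Type*} [MeasurableSpace Ω] (μ : Measure Ω) [IsProbabilityMeasure μ]
    {α β γ : Type*} [Fintype α] [Fintype β] [Fintype γ]
    [MeasurableSpace α] [MeasurableSingletonClass α]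
    [MeasurableSpace β] [MeasurableSingletonClass β]
    [MeasurableSpace γ] [MeasurableSingletonClass γ]
    (X : Ω → α) (Y : Ω → β) (C : Ω → γ)
    (hX : Measurable X) (hY : Measurable Y) (hC : Measurable C) :
    0 ≤ condMutInfo μ X Y C := by
  classical
  have hW : Measurable (fun ω => (X ω, Y ω, C ω)) := hX.prodMk (hY.prodMk hC)
  set q : α → β → γ → ℝ :=
    fun a b c => (μ ((fun ω => (X ω, Y ω, C ω)) ⁻¹' {(a, b, c)})).toReal with hq_def
  have hq0 : ∀ a b c, 0 ≤ q a b c := fun a b c => ENNReal.toReal_nonneg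
  have e1 : ent μ (fun ω => (X ω, C ω)) = ∑ a, ∑ c, Real.negMulLog (∑ b, q a b c) := by
    have h := ent_comp_eq (μ := μ) hW (fun t => (t.1, t.2.2))
    rw [show ent μ (fun ω => (X ω, C ω)) = ent μ (fun ω => ((X ω, Y ω, C ω).1, (X ω, Y ω, C ω).2.2))
      from rfl, h, Fintype.sum_prod_type]
    refine Finset.sum_congr rfl fun a _ => Finset.sum_congr rfl fun c _ => ?_
    congr 1
    simp [Fintype.sum_prod_type, Prod.mk.injEq, ite_and, Finset.sum_ite_eq, Finset.sum_ite_eq']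
    rfl
  have e2 : ent μ (fun ω => (Y ω, C ω)) = ∑ b, ∑ c, Real.negMulLog (∑ a, q a b c) := by
    have h := ent_comp_eq (μ := μ) hW (fun t => t.2)
    rw [show ent μ (fun ω => (Y ω, C ω)) = ent μ (fun ω => (X ω, Y ω, C ω).2) from rfl, h,
      Fintype.sum_prod_type]
    refine Finset.sum_congr rfl fun b _ => Finset.sum_congr rfl fun c _ => ?_
    congr 1
    simp [Fintype.sum_prod_type, Prod.mk.injEq, ite_and, Finset.sum_ite_eq, Finset.sum_ite_eq']
    rfl
  have e4 : ent μ C = ∑ c, Real.negMulLog (∑ a, ∑ b, q a b c) := by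
    have h := ent_comp_eq (μ := μ) hW (fun t => t.2.2)
    rw [show ent μ C = ent μ (fun ω => (X ω, Y ω, C ω).2.2) from rfl, h]
    refine Finset.sum_congr rfl fun c _ => ?_
    congr 1
    simp [Fintype.sum_prod_type, Prod.mk.injEq, ite_and, Finset.sum_ite_eq, Finset.sum_ite_eq']
    rfl
  have e3 : ent μ (fun ω => ((X ω, Y ω), C ω)) = ∑ a, ∑ b, ∑ c, Real.negMulLog (q a b c) := by
    have hcongr : ent μ (fun ω => ((X ω, Y ω), C ω)) = ent μ (fun ω => (X ω, Y ω, C ω)) := by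
      refine ent_congr (fun t => ((t.1, t.2.1), t.2.2)) ?_ (fun ω => rfl)
      exact Function.LeftInverse.injective
        (g := fun p => (p.1.1, p.1.2, p.2)) (fun t => rfl)
    rw [hcongr]
    unfold ent
    rw [Fintype.sum_prod_type]
    refine Finset.sum_congr rfl fun a _ => ?_
    rw [Fintype.sum_prod_type]
  unfold condMutInfo condEnt
  have expand : ent μ (fun ω => ((fun ω => (X ω, Y ω)) ω, C ω)) = ent μ (fun ω => ((X ω, Y ω), C ω)) := rfl
  rw [expand, e1, e2, e3, e4]
  have := pmf_cmi q hq0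
  linarith [this]

/-- the paper's recursive Lemma 1: under the four Markov-chain
hypotheses,
H((K',K) | ((Z',Z),(S',S))) + I((M,X',X) ; (Y',Y) | ((K',K),(Z',Z),(S',S))) + H((S',S)|(Z',Z))
  <= H(K'|(Z',S')) + I((M,X') ; Y' | (K',Z',S')) + H(S'|Z')
     + H(K | (M,X',K',Z',S')) + I(X;Y|(Z,S)) + H(S|Z). -/
theorem stmt_0
    {Ω : Type*} [MeasurableSpace Ω] (μ : Measure Ω) [IsProbabilityMeasure μ]
    {𝓜 𝓧' 𝓧 𝓚' 𝓚 𝓨' 𝓨 𝓩' 𝓩 𝓢' 𝓢 : Type*}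
    [Fintype 𝓜] [Nonempty 𝓜] [MeasurableSpace 𝓜] [DiscreteMeasurableSpace 𝓜]
    [Fintype 𝓧'] [Nonempty 𝓧'] [MeasurableSpace 𝓧'] [DiscreteMeasurableSpace 𝓧']
    [Fintype 𝓧] [Nonempty 𝓧] [MeasurableSpace 𝓧] [DiscreteMeasurableSpace 𝓧]
    [Fintype 𝓚'] [Nonempty 𝓚'] [MeasurableSpace 𝓚'] [DiscreteMeasurableSpace 𝓚']
    [Fintype 𝓚] [Nonempty 𝓚] [MeasurableSpace 𝓚] [DiscreteMeasurableSpace 𝓚]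
    [Fintype 𝓨'] [Nonempty 𝓨'] [MeasurableSpace 𝓨'] [DiscreteMeasurableSpace 𝓨']
    [Fintype 𝓨] [Nonempty 𝓨] [MeasurableSpace 𝓨] [DiscreteMeasurableSpace 𝓨]
    [Fintype 𝓩'] [Nonempty 𝓩'] [MeasurableSpace 𝓩'] [DiscreteMeasurableSpace 𝓩']
    [Fintype 𝓩] [Nonempty 𝓩] [MeasurableSpace 𝓩] [DiscreteMeasurableSpace 𝓩]
    [Fintype 𝓢'] [Nonempty 𝓢'] [MeasurableSpace 𝓢'] [DiscreteMeasurableSpace 𝓢']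
    [Fintype 𝓢] [Nonempty 𝓢] [MeasurableSpace 𝓢] [DiscreteMeasurableSpace 𝓢]
    (M : Ω → 𝓜) (X' : Ω → 𝓧') (X : Ω → 𝓧) (K' : Ω → 𝓚') (K : Ω → 𝓚)
    (Y' : Ω → 𝓨') (Y : Ω → 𝓨) (Z' : Ω → 𝓩') (Z : Ω → 𝓩) (S' : Ω → 𝓢') (S : Ω → 𝓢)
    (hM : Measurable M) (hX' : Measurable X') (hX : Measurable X)
    (hK' : Measurable K') (hK : Measurable K) (hY' : Measurable Y') (hY : Measurable Y)
    (hZ' : Measurable Z') (hZ : Measurable Z) (hS' : Measurable S') (hS : Measurable S)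
    -- (i) Y ⊥ (M, X', K', K, Y', Z', S') | (X, Z, S)
    (hi : condMutInfo μ Y
      (fun ω => (M ω, X' ω, K' ω, K ω, Y' ω, Z' ω, S' ω))
      (fun ω => (X ω, Z ω, S ω)) = 0)
    -- (ii) (S, Z) ⊥ Y' | (M, X', X, K', K, Z', S')
    (hii : condMutInfo μ (fun ω => (S ω, Z ω)) Y'
      (fun ω => (M ω, X' ω, X ω, K' ω, K ω, Z' ω, S' ω)) = 0)
    -- (iii) X ⊥ Y' | (M, X', K', K, Z', S')
    (hiii : condMutInfo μ X Y'
      (fun ω => (M ω, X' ω, K' ω, K ω, Z' ω, S' ω)) = 0)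
    -- (iv) K ⊥ (M, X') | (Y', K', Z', S')
    (hiv : condMutInfo μ K (fun ω => (M ω, X' ω))
      (fun ω => (Y' ω, K' ω, Z' ω, S' ω)) = 0) :
    condEnt μ (fun ω => (K' ω, K ω)) (fun ω => ((Z' ω, Z ω), (S' ω, S ω)))
      + condMutInfo μ (fun ω => (M ω, X' ω, X ω)) (fun ω => (Y' ω, Y ω))
          (fun ω => ((K' ω, K ω), (Z' ω, Z ω), (S' ω, S ω)))
      + condEnt μ (fun ω => (S' ω, S ω)) (fun ω => (Z' ω, Z ω))
    ≤ condEnt μ K' (fun ω => (Z' ω, S' ω))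
      + condMutInfo μ (fun ω => (M ω, X' ω)) Y' (fun ω => (K' ω, Z' ω, S' ω))
      + condEnt μ S' Z'
      + condEnt μ K (fun ω => (M ω, X' ω, K' ω, Z' ω, S' ω))
      + condMutInfo μ X Y (fun ω => (Z ω, S ω))
      + condEnt μ S Z := by
    classical
  have c1 : ent μ (fun ω => (Y ω, X ω, Z ω, S ω)) = ent μ (fun ω => (X ω, Y ω, Z ω, S ω)) :=
    ent_congr (fun p => (p.2.1, p.1, p.2.2.1, p.2.2.2))
      (Function.LeftInverse.injective (g := (fun p => (p.2.1, p.1, p.2.2.1, p.2.2.2))) (fun p => rfl)) (fun ω => rfl)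
  have c2 : ent μ (fun ω => ((M ω, X' ω, K' ω, K ω, Y' ω, Z' ω, S' ω), X ω, Z ω, S ω)) = ent μ (fun ω => (M ω, X' ω, X ω, K' ω, K ω, Y' ω, Z' ω, Z ω, S' ω, S ω)) :=
    ent_congr (fun p => ((p.1, p.2.1, p.2.2.2.1, p.2.2.2.2.1, p.2.2.2.2.2.1, p.2.2.2.2.2.2.1, p.2.2.2.2.2.2.2.2.1), p.2.2.1, p.2.2.2.2.2.2.2.1, p.2.2.2.2.2.2.2.2.2))
      (Function.LeftInverse.injective (g := (fun p => (p.1.1, p.1.2.1, p.2.1, p.1.2.2.1, p.1.2.2.2.1, p.1.2.2.2.2.1, p.1.2.2.2.2.2.1, p.2.2.1, p.1.2.2.2.2.2.2, p.2.2.2))) (fun p => rfl)) (fun ω => rfl)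
  have c3 : ent μ (fun ω => ((Y ω, M ω, X' ω, K' ω, K ω, Y' ω, Z' ω, S' ω), X ω, Z ω, S ω)) = ent μ (fun ω => (M ω, X' ω, X ω, K' ω, K ω, Y' ω, Y ω, Z' ω, Z ω, S' ω, S ω)) :=
    ent_congr (fun p => ((p.2.2.2.2.2.2.1, p.1, p.2.1, p.2.2.2.1, p.2.2.2.2.1, p.2.2.2.2.2.1, p.2.2.2.2.2.2.2.1, p.2.2.2.2.2.2.2.2.2.1), p.2.2.1, p.2.2.2.2.2.2.2.2.1, p.2.2.2.2.2.2.2.2.2.2))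
      (Function.LeftInverse.injective (g := (fun p => (p.1.2.1, p.1.2.2.1, p.2.1, p.1.2.2.2.1, p.1.2.2.2.2.1, p.1.2.2.2.2.2.1, p.1.1, p.1.2.2.2.2.2.2.1, p.2.2.1, p.1.2.2.2.2.2.2.2, p.2.2.2))) (fun p => rfl)) (fun ω => rfl)
  have c4 : ent μ (fun ω => ((S ω, Z ω), M ω, X' ω, X ω, K' ω, K ω, Z' ω, S' ω)) = ent μ (fun ω => (M ω, X' ω, X ω, K' ω, K ω, Z' ω, Z ω, S' ω, S ω)) :=
    ent_congr (fun p => ((p.2.2.2.2.2.2.2.2, p.2.2.2.2.2.2.1), p.1, p.2.1, p.2.2.1, p.2.2.2.1, p.2.2.2.2.1, p.2.2.2.2.2.1, p.2.2.2.2.2.2.2.1))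
      (Function.LeftInverse.injective (g := (fun p => (p.2.1, p.2.2.1, p.2.2.2.1, p.2.2.2.2.1, p.2.2.2.2.2.1, p.2.2.2.2.2.2.1, p.1.2, p.2.2.2.2.2.2.2, p.1.1))) (fun p => rfl)) (fun ω => rfl)
  have c5 : ent μ (fun ω => (Y' ω, M ω, X' ω, X ω, K' ω, K ω, Z' ω, S' ω)) = ent μ (fun ω => (M ω, X' ω, X ω, K' ω, K ω, Y' ω, Z' ω, S' ω)) :=
    ent_congr (fun p => (p.2.2.2.2.2.1, p.1, p.2.1, p.2.2.1, p.2.2.2.1, p.2.2.2.2.1, p.2.2.2.2.2.2.1, p.2.2.2.2.2.2.2))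
      (Function.LeftInverse.injective (g := (fun p => (p.2.1, p.2.2.1, p.2.2.2.1, p.2.2.2.2.1, p.2.2.2.2.2.1, p.1, p.2.2.2.2.2.2.1, p.2.2.2.2.2.2.2))) (fun p => rfl)) (fun ω => rfl)
  have c6 : ent μ (fun ω => (((S ω, Z ω), Y' ω), M ω, X' ω, X ω, K' ω, K ω, Z' ω, S' ω)) = ent μ (fun ω => (M ω, X' ω, X ω, K' ω, K ω, Y' ω, Z' ω, Z ω, S' ω, S ω)) :=
    ent_congr (fun p => (((p.2.2.2.2.2.2.2.2.2, p.2.2.2.2.2.2.2.1), p.2.2.2.2.2.1), p.1, p.2.1, p.2.2.1, p.2.2.2.1, p.2.2.2.2.1, p.2.2.2.2.2.2.1, p.2.2.2.2.2.2.2.2.1))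
      (Function.LeftInverse.injective (g := (fun p => (p.2.1, p.2.2.1, p.2.2.2.1, p.2.2.2.2.1, p.2.2.2.2.2.1, p.1.2, p.2.2.2.2.2.2.1, p.1.1.2, p.2.2.2.2.2.2.2, p.1.1.1))) (fun p => rfl)) (fun ω => rfl)
  have c7 : ent μ (fun ω => (X ω, M ω, X' ω, K' ω, K ω, Z' ω, S' ω)) = ent μ (fun ω => (M ω, X' ω, X ω, K' ω, K ω, Z' ω, S' ω)) :=
    ent_congr (fun p => (p.2.2.1, p.1, p.2.1, p.2.2.2.1, p.2.2.2.2.1, p.2.2.2.2.2.1, p.2.2.2.2.2.2))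
      (Function.LeftInverse.injective (g := (fun p => (p.2.1, p.2.2.1, p.1, p.2.2.2.1, p.2.2.2.2.1, p.2.2.2.2.2.1, p.2.2.2.2.2.2))) (fun p => rfl)) (fun ω => rfl)
  have c8 : ent μ (fun ω => (Y' ω, M ω, X' ω, K' ω, K ω, Z' ω, S' ω)) = ent μ (fun ω => (M ω, X' ω, K' ω, K ω, Y' ω, Z' ω, S' ω)) :=
    ent_congr (fun p => (p.2.2.2.2.1, p.1, p.2.1, p.2.2.1, p.2.2.2.1, p.2.2.2.2.2.1, p.2.2.2.2.2.2))
      (Function.LeftInverse.injective (g := (fun p => (p.2.1, p.2.2.1, p.2.2.2.1, p.2.2.2.2.1, p.1, p.2.2.2.2.2.1, p.2.2.2.2.2.2))) (fun p => rfl)) (fun ω => rfl)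
  have c9 : ent μ (fun ω => ((X ω, Y' ω), M ω, X' ω, K' ω, K ω, Z' ω, S' ω)) = ent μ (fun ω => (M ω, X' ω, X ω, K' ω, K ω, Y' ω, Z' ω, S' ω)) :=
    ent_congr (fun p => ((p.2.2.1, p.2.2.2.2.2.1), p.1, p.2.1, p.2.2.2.1, p.2.2.2.2.1, p.2.2.2.2.2.2.1, p.2.2.2.2.2.2.2))
      (Function.LeftInverse.injective (g := (fun p => (p.2.1, p.2.2.1, p.1.1, p.2.2.2.1, p.2.2.2.2.1, p.1.2, p.2.2.2.2.2.1, p.2.2.2.2.2.2))) (fun p => rfl)) (fun ω => rfl)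
  have c10 : ent μ (fun ω => (K ω, Y' ω, K' ω, Z' ω, S' ω)) = ent μ (fun ω => (K' ω, K ω, Y' ω, Z' ω, S' ω)) :=
    ent_congr (fun p => (p.2.1, p.2.2.1, p.1, p.2.2.2.1, p.2.2.2.2))
      (Function.LeftInverse.injective (g := (fun p => (p.2.2.1, p.1, p.2.1, p.2.2.2.1, p.2.2.2.2))) (fun p => rfl)) (fun ω => rfl)
  have c11 : ent μ (fun ω => ((M ω, X' ω), Y' ω, K' ω, Z' ω, S' ω)) = ent μ (fun ω => (M ω, X' ω, K' ω, Y' ω, Z' ω, S' ω)) :=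
    ent_congr (fun p => ((p.1, p.2.1), p.2.2.2.1, p.2.2.1, p.2.2.2.2.1, p.2.2.2.2.2))
      (Function.LeftInverse.injective (g := (fun p => (p.1.1, p.1.2, p.2.2.1, p.2.1, p.2.2.2.1, p.2.2.2.2))) (fun p => rfl)) (fun ω => rfl)
  have c12 : ent μ (fun ω => ((K ω, M ω, X' ω), Y' ω, K' ω, Z' ω, S' ω)) = ent μ (fun ω => (M ω, X' ω, K' ω, K ω, Y' ω, Z' ω, S' ω)) :=
    ent_congr (fun p => ((p.2.2.2.1, p.1, p.2.1), p.2.2.2.2.1, p.2.2.1, p.2.2.2.2.2.1, p.2.2.2.2.2.2))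
      (Function.LeftInverse.injective (g := (fun p => (p.1.2.1, p.1.2.2, p.2.2.1, p.1.1, p.2.1, p.2.2.2.1, p.2.2.2.2))) (fun p => rfl)) (fun ω => rfl)
  have c13 : ent μ (fun ω => (Y' ω, K' ω, Z' ω, S' ω)) = ent μ (fun ω => (K' ω, Y' ω, Z' ω, S' ω)) :=
    ent_congr (fun p => (p.2.1, p.1, p.2.2.1, p.2.2.2))
      (Function.LeftInverse.injective (g := (fun p => (p.2.1, p.1, p.2.2.1, p.2.2.2))) (fun p => rfl)) (fun ω => rfl)
  have c14 : ent μ (fun ω => ((K' ω, Y' ω), Z' ω, S' ω)) = ent μ (fun ω => (K' ω, Y' ω, Z' ω, S' ω)) :=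
    ent_congr (fun p => ((p.1, p.2.1), p.2.2.1, p.2.2.2))
      (Function.LeftInverse.injective (g := (fun p => (p.1.1, p.1.2, p.2.1, p.2.2))) (fun p => rfl)) (fun ω => rfl)
  have c15 : ent μ (fun ω => ((Z ω, S ω), Z' ω, S' ω)) = ent μ (fun ω => (Z' ω, Z ω, S' ω, S ω)) :=
    ent_congr (fun p => ((p.2.1, p.2.2.2), p.1, p.2.2.1))
      (Function.LeftInverse.injective (g := (fun p => (p.2.1, p.1.1, p.2.2, p.1.2))) (fun p => rfl)) (fun ω => rfl)
  have c16 : ent μ (fun ω => (((K' ω, Y' ω), Z ω, S ω), Z' ω, S' ω)) = ent μ (fun ω => (K' ω, Y' ω, Z' ω, Z ω, S' ω, S ω)) :=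
    ent_congr (fun p => (((p.1, p.2.1), p.2.2.2.1, p.2.2.2.2.2), p.2.2.1, p.2.2.2.2.1))
      (Function.LeftInverse.injective (g := (fun p => (p.1.1.1, p.1.1.2, p.2.1, p.1.2.1, p.2.2, p.1.2.2))) (fun p => rfl)) (fun ω => rfl)
  have c17 : ent μ (fun ω => (K ω, K' ω, Y' ω, Z' ω, S' ω)) = ent μ (fun ω => (K' ω, K ω, Y' ω, Z' ω, S' ω)) :=
    ent_congr (fun p => (p.2.1, p.1, p.2.2.1, p.2.2.2.1, p.2.2.2.2))
      (Function.LeftInverse.injective (g := (fun p => (p.2.1, p.1, p.2.2.1, p.2.2.2.1, p.2.2.2.2))) (fun p => rfl)) (fun ω => rfl)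
  have c18 : ent μ (fun ω => ((Z ω, S ω), K' ω, Y' ω, Z' ω, S' ω)) = ent μ (fun ω => (K' ω, Y' ω, Z' ω, Z ω, S' ω, S ω)) :=
    ent_congr (fun p => ((p.2.2.2.1, p.2.2.2.2.2), p.1, p.2.1, p.2.2.1, p.2.2.2.2.1))
      (Function.LeftInverse.injective (g := (fun p => (p.2.1, p.2.2.1, p.2.2.2.1, p.1.1, p.2.2.2.2, p.1.2))) (fun p => rfl)) (fun ω => rfl)
  have c19 : ent μ (fun ω => ((K ω, Z ω, S ω), K' ω, Y' ω, Z' ω, S' ω)) = ent μ (fun ω => (K' ω, K ω, Y' ω, Z' ω, Z ω, S' ω, S ω)) :=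
    ent_congr (fun p => ((p.2.1, p.2.2.2.2.1, p.2.2.2.2.2.2), p.1, p.2.2.1, p.2.2.2.1, p.2.2.2.2.2.1))
      (Function.LeftInverse.injective (g := (fun p => (p.2.1, p.1.1, p.2.2.1, p.2.2.2.1, p.1.2.1, p.2.2.2.2, p.1.2.2))) (fun p => rfl)) (fun ω => rfl)
  have c20 : ent μ (fun ω => ((K' ω, K ω, Y' ω, Z' ω, S' ω), Z ω, S ω)) = ent μ (fun ω => (K' ω, K ω, Y' ω, Z' ω, Z ω, S' ω, S ω)) :=
    ent_congr (fun p => ((p.1, p.2.1, p.2.2.1, p.2.2.2.1, p.2.2.2.2.2.1), p.2.2.2.2.1, p.2.2.2.2.2.2))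
      (Function.LeftInverse.injective (g := (fun p => (p.1.1, p.1.2.1, p.1.2.2.1, p.1.2.2.2.1, p.2.1, p.1.2.2.2.2, p.2.2))) (fun p => rfl)) (fun ω => rfl)
  have c21 : ent μ (fun ω => ((Y ω, K' ω, K ω, Y' ω, Z' ω, S' ω), Z ω, S ω)) = ent μ (fun ω => (K' ω, K ω, Y' ω, Y ω, Z' ω, Z ω, S' ω, S ω)) :=
    ent_congr (fun p => ((p.2.2.2.1, p.1, p.2.1, p.2.2.1, p.2.2.2.2.1, p.2.2.2.2.2.2.1), p.2.2.2.2.2.1, p.2.2.2.2.2.2.2))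
      (Function.LeftInverse.injective (g := (fun p => (p.1.2.1, p.1.2.2.1, p.1.2.2.2.1, p.1.1, p.1.2.2.2.2.1, p.2.1, p.1.2.2.2.2.2, p.2.2))) (fun p => rfl)) (fun ω => rfl)
  have c22 : ent μ (fun ω => (S' ω, Z' ω)) = ent μ (fun ω => (Z' ω, S' ω)) :=
    ent_congr (fun p => (p.2, p.1))
      (Function.LeftInverse.injective (g := (fun p => (p.2, p.1))) (fun p => rfl)) (fun ω => rfl)
  have c23 : ent μ (fun ω => (Z ω, Z' ω)) = ent μ (fun ω => (Z' ω, Z ω)) :=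
    ent_congr (fun p => (p.2, p.1))
      (Function.LeftInverse.injective (g := (fun p => (p.2, p.1))) (fun p => rfl)) (fun ω => rfl)
  have c24 : ent μ (fun ω => ((S' ω, Z ω), Z' ω)) = ent μ (fun ω => (Z' ω, Z ω, S' ω)) :=
    ent_congr (fun p => ((p.2.2, p.2.1), p.1))
      (Function.LeftInverse.injective (g := (fun p => (p.2, p.1.2, p.1.1))) (fun p => rfl)) (fun ω => rfl)
  have c25 : ent μ (fun ω => (S ω, Z ω)) = ent μ (fun ω => (Z ω, S ω)) :=
    ent_congr (fun p => (p.2, p.1))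
      (Function.LeftInverse.injective (g := (fun p => (p.2, p.1))) (fun p => rfl)) (fun ω => rfl)
  have c26 : ent μ (fun ω => ((Z' ω, S' ω), Z ω)) = ent μ (fun ω => (Z' ω, Z ω, S' ω)) :=
    ent_congr (fun p => ((p.1, p.2.2), p.2.1))
      (Function.LeftInverse.injective (g := (fun p => (p.1.1, p.2, p.1.2))) (fun p => rfl)) (fun ω => rfl)
  have c27 : ent μ (fun ω => ((S ω, Z' ω, S' ω), Z ω)) = ent μ (fun ω => (Z' ω, Z ω, S' ω, S ω)) :=
    ent_congr (fun p => ((p.2.2.2, p.1, p.2.2.1), p.2.1))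
      (Function.LeftInverse.injective (g := (fun p => (p.1.2.1, p.2, p.1.2.2, p.1.1))) (fun p => rfl)) (fun ω => rfl)
  have c28 : ent μ (fun ω => ((K' ω, K ω), (Z' ω, Z ω), S' ω, S ω)) = ent μ (fun ω => (K' ω, K ω, Z' ω, Z ω, S' ω, S ω)) :=
    ent_congr (fun p => ((p.1, p.2.1), (p.2.2.1, p.2.2.2.1), p.2.2.2.2.1, p.2.2.2.2.2))
      (Function.LeftInverse.injective (g := (fun p => (p.1.1, p.1.2, p.2.1.1, p.2.1.2, p.2.2.1, p.2.2.2))) (fun p => rfl)) (fun ω => rfl)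
  have c29 : ent μ (fun ω => ((Z' ω, Z ω), S' ω, S ω)) = ent μ (fun ω => (Z' ω, Z ω, S' ω, S ω)) :=
    ent_congr (fun p => ((p.1, p.2.1), p.2.2.1, p.2.2.2))
      (Function.LeftInverse.injective (g := (fun p => (p.1.1, p.1.2, p.2.1, p.2.2))) (fun p => rfl)) (fun ω => rfl)
  have c30 : ent μ (fun ω => ((M ω, X' ω, X ω), (K' ω, K ω), (Z' ω, Z ω), S' ω, S ω)) = ent μ (fun ω => (M ω, X' ω, X ω, K' ω, K ω, Z' ω, Z ω, S' ω, S ω)) :=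
    ent_congr (fun p => ((p.1, p.2.1, p.2.2.1), (p.2.2.2.1, p.2.2.2.2.1), (p.2.2.2.2.2.1, p.2.2.2.2.2.2.1), p.2.2.2.2.2.2.2.1, p.2.2.2.2.2.2.2.2))
      (Function.LeftInverse.injective (g := (fun p => (p.1.1, p.1.2.1, p.1.2.2, p.2.1.1, p.2.1.2, p.2.2.1.1, p.2.2.1.2, p.2.2.2.1, p.2.2.2.2))) (fun p => rfl)) (fun ω => rfl)
  have c31 : ent μ (fun ω => ((Y' ω, Y ω), (K' ω, K ω), (Z' ω, Z ω), S' ω, S ω)) = ent μ (fun ω => (K' ω, K ω, Y' ω, Y ω, Z' ω, Z ω, S' ω, S ω)) :=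
    ent_congr (fun p => ((p.2.2.1, p.2.2.2.1), (p.1, p.2.1), (p.2.2.2.2.1, p.2.2.2.2.2.1), p.2.2.2.2.2.2.1, p.2.2.2.2.2.2.2))
      (Function.LeftInverse.injective (g := (fun p => (p.2.1.1, p.2.1.2, p.1.1, p.1.2, p.2.2.1.1, p.2.2.1.2, p.2.2.2.1, p.2.2.2.2))) (fun p => rfl)) (fun ω => rfl)
  have c32 : ent μ (fun ω => (((M ω, X' ω, X ω), Y' ω, Y ω), (K' ω, K ω), (Z' ω, Z ω), S' ω, S ω)) = ent μ (fun ω => (M ω, X' ω, X ω, K' ω, K ω, Y' ω, Y ω, Z' ω, Z ω, S' ω, S ω)) :=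
    ent_congr (fun p => (((p.1, p.2.1, p.2.2.1), p.2.2.2.2.2.1, p.2.2.2.2.2.2.1), (p.2.2.2.1, p.2.2.2.2.1), (p.2.2.2.2.2.2.2.1, p.2.2.2.2.2.2.2.2.1), p.2.2.2.2.2.2.2.2.2.1, p.2.2.2.2.2.2.2.2.2.2))
      (Function.LeftInverse.injective (g := (fun p => (p.1.1.1, p.1.1.2.1, p.1.1.2.2, p.2.1.1, p.2.1.2, p.1.2.1, p.1.2.2, p.2.2.1.1, p.2.2.1.2, p.2.2.2.1, p.2.2.2.2))) (fun p => rfl)) (fun ω => rfl)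
  have c33 : ent μ (fun ω => ((S' ω, S ω), Z' ω, Z ω)) = ent μ (fun ω => (Z' ω, Z ω, S' ω, S ω)) :=
    ent_congr (fun p => ((p.2.2.1, p.2.2.2), p.1, p.2.1))
      (Function.LeftInverse.injective (g := (fun p => (p.2.1, p.2.2, p.1.1, p.1.2))) (fun p => rfl)) (fun ω => rfl)
  have c34 : ent μ (fun ω => ((M ω, X' ω), K' ω, Z' ω, S' ω)) = ent μ (fun ω => (M ω, X' ω, K' ω, Z' ω, S' ω)) :=
    ent_congr (fun p => ((p.1, p.2.1), p.2.2.1, p.2.2.2.1, p.2.2.2.2))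
      (Function.LeftInverse.injective (g := (fun p => (p.1.1, p.1.2, p.2.1, p.2.2.1, p.2.2.2))) (fun p => rfl)) (fun ω => rfl)
  have c35 : ent μ (fun ω => (((M ω, X' ω), Y' ω), K' ω, Z' ω, S' ω)) = ent μ (fun ω => (M ω, X' ω, K' ω, Y' ω, Z' ω, S' ω)) :=
    ent_congr (fun p => (((p.1, p.2.1), p.2.2.2.1), p.2.2.1, p.2.2.2.2.1, p.2.2.2.2.2))
      (Function.LeftInverse.injective (g := (fun p => (p.1.1.1, p.1.1.2, p.2.1, p.1.2, p.2.2.1, p.2.2.2))) (fun p => rfl)) (fun ω => rfl)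
  have c36 : ent μ (fun ω => (K ω, M ω, X' ω, K' ω, Z' ω, S' ω)) = ent μ (fun ω => (M ω, X' ω, K' ω, K ω, Z' ω, S' ω)) :=
    ent_congr (fun p => (p.2.2.2.1, p.1, p.2.1, p.2.2.1, p.2.2.2.2.1, p.2.2.2.2.2))
      (Function.LeftInverse.injective (g := (fun p => (p.2.1, p.2.2.1, p.2.2.2.1, p.1, p.2.2.2.2.1, p.2.2.2.2.2))) (fun p => rfl)) (fun ω => rfl)
  have c37 : ent μ (fun ω => ((X ω, Y ω), Z ω, S ω)) = ent μ (fun ω => (X ω, Y ω, Z ω, S ω)) :=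
    ent_congr (fun p => ((p.1, p.2.1), p.2.2.1, p.2.2.2))
      (Function.LeftInverse.injective (g := (fun p => (p.1.1, p.1.2, p.2.1, p.2.2))) (fun p => rfl)) (fun ω => rfl)
  have hi' : ent μ (fun ω => (X ω, Y ω, Z ω, S ω)) + ent μ (fun ω => (M ω, X' ω, X ω, K' ω, K ω, Y' ω, Z' ω, Z ω, S' ω, S ω)) - ent μ (fun ω => (M ω, X' ω, X ω, K' ω, K ω, Y' ω, Y ω, Z' ω, Z ω, S' ω, S ω)) - ent μ (fun ω => (X ω, Z ω, S ω)) = 0 := by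
    have h := hi
    simp only [condMutInfo, condEnt] at h
    linarith [h, c1, c2, c3]
  have hii' : ent μ (fun ω => (M ω, X' ω, X ω, K' ω, K ω, Z' ω, Z ω, S' ω, S ω)) + ent μ (fun ω => (M ω, X' ω, X ω, K' ω, K ω, Y' ω, Z' ω, S' ω)) - ent μ (fun ω => (M ω, X' ω, X ω, K' ω, K ω, Y' ω, Z' ω, Z ω, S' ω, S ω)) - ent μ (fun ω => (M ω, X' ω, X ω, K' ω, K ω, Z' ω, S' ω)) = 0 := by
    have h := hii
    simp only [condMutInfo, condEnt] at h
    linarith [h, c4, c5, c6]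
  have hiii' : ent μ (fun ω => (M ω, X' ω, X ω, K' ω, K ω, Z' ω, S' ω)) + ent μ (fun ω => (M ω, X' ω, K' ω, K ω, Y' ω, Z' ω, S' ω)) - ent μ (fun ω => (M ω, X' ω, X ω, K' ω, K ω, Y' ω, Z' ω, S' ω)) - ent μ (fun ω => (M ω, X' ω, K' ω, K ω, Z' ω, S' ω)) = 0 := by
    have h := hiii
    simp only [condMutInfo, condEnt] at h
    linarith [h, c7, c8, c9]
  have hiv' : ent μ (fun ω => (K' ω, K ω, Y' ω, Z' ω, S' ω)) + ent μ (fun ω => (M ω, X' ω, K' ω, Y' ω, Z' ω, S' ω)) - ent μ (fun ω => (M ω, X' ω, K' ω, K ω, Y' ω, Z' ω, S' ω)) - ent μ (fun ω => (K' ω, Y' ω, Z' ω, S' ω)) = 0 := by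
    have h := hiv
    simp only [condMutInfo, condEnt] at h
    linarith [h, c10, c11, c12, c13]
  have hN1 : 0 ≤ ent μ (fun ω => (K' ω, Y' ω, Z' ω, S' ω)) + ent μ (fun ω => (Z' ω, Z ω, S' ω, S ω)) - ent μ (fun ω => (K' ω, Y' ω, Z' ω, Z ω, S' ω, S ω)) - ent μ (fun ω => (Z' ω, S' ω)) := by
    have h := condMutInfo_nonneg μ (fun ω => (K' ω, Y' ω))
      (fun ω => (Z ω, S ω))
      (fun ω => (Z' ω, S' ω)) (by fun_prop) (by fun_prop) (by fun_prop)
    simp only [condMutInfo, condEnt] at h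
    linarith [h, c14, c15, c16]
  have hN2 : 0 ≤ ent μ (fun ω => (K' ω, K ω, Y' ω, Z' ω, S' ω)) + ent μ (fun ω => (K' ω, Y' ω, Z' ω, Z ω, S' ω, S ω)) - ent μ (fun ω => (K' ω, K ω, Y' ω, Z' ω, Z ω, S' ω, S ω)) - ent μ (fun ω => (K' ω, Y' ω, Z' ω, S' ω)) := by
    have h := condMutInfo_nonneg μ (fun ω => K ω)
      (fun ω => (Z ω, S ω))
      (fun ω => (K' ω, Y' ω, Z' ω, S' ω)) (by fun_prop) (by fun_prop) (by fun_prop)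
    simp only [condMutInfo, condEnt] at h
    linarith [h, c17, c18, c19]
  have hN3 : 0 ≤ ent μ (fun ω => (Y ω, Z ω, S ω)) + ent μ (fun ω => (K' ω, K ω, Y' ω, Z' ω, Z ω, S' ω, S ω)) - ent μ (fun ω => (K' ω, K ω, Y' ω, Y ω, Z' ω, Z ω, S' ω, S ω)) - ent μ (fun ω => (Z ω, S ω)) := by
    have h := condMutInfo_nonneg μ (fun ω => Y ω)
      (fun ω => (K' ω, K ω, Y' ω, Z' ω, S' ω))
      (fun ω => (Z ω, S ω)) (by fun_prop) (by fun_prop) (by fun_prop)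
    simp only [condMutInfo, condEnt] at h
    linarith [h, c20, c21]
  have hN4 : 0 ≤ ent μ (fun ω => (Z' ω, S' ω)) + ent μ (fun ω => (Z' ω, Z ω)) - ent μ (fun ω => (Z' ω, Z ω, S' ω)) - ent μ (fun ω => (Z' ω)) := by
    have h := condMutInfo_nonneg μ (fun ω => S' ω)
      (fun ω => Z ω)
      (fun ω => (Z' ω)) (by fun_prop) (by fun_prop) (by fun_prop)
    simp only [condMutInfo, condEnt] at h
    linarith [h, c22, c23, c24]
  have hN5 : 0 ≤ ent μ (fun ω => (Z ω, S ω)) + ent μ (fun ω => (Z' ω, Z ω, S' ω)) - ent μ (fun ω => (Z' ω, Z ω, S' ω, S ω)) - ent μ (fun ω => (Z ω)) := by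
    have h := condMutInfo_nonneg μ (fun ω => S ω)
      (fun ω => (Z' ω, S' ω))
      (fun ω => (Z ω)) (by fun_prop) (by fun_prop) (by fun_prop)
    simp only [condMutInfo, condEnt] at h
    linarith [h, c25, c26, c27]
  simp only [condMutInfo, condEnt]
  linarith [hi', hii', hiii', hiv', hN1, hN2, hN3, hN4, hN5, c13, c22, c25, c28, c29, c30, c31, c32, c33, c34, c35, c36, c37]
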